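/- arXiv:0903.0762 — 2 statements merged into one kernel-verified Lean document; each statement's English description precedes it below -/
import Mathlib

section
/- Let Λ be an Artinian algebra and let 0 → A → B → C → 0 be a non-split short exact sequence of finitely generated Λ-modules. If C is indecomposable, then the monomorphism g: A → B is left minimal; if A is indecomposable, then the epimorphism f: B → C is right minimal. -/
set_option synthInstance.maxHeartbeats 1000000
set_option maxHeartbeats 1000000
open CategoryTheory

namespace Paper

variable (Λ : Type) [Ring Λ]

/-- `extZero Λ n X Y` means `Ext^n_Λ(X, Y) = 0`. -/
noncomputable def extZero (n : ℕ) (X Y : ModuleCat.{0} Λ) : Prop :=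
  letI : HasDerivedCategory (ModuleCat.{0} Λ) := HasDerivedCategory.standard _
  haveI : HasExt.{1} (ModuleCat.{0} Λ) := hasExt_of_hasDerivedCategory _
  Subsingleton (Abelian.Ext.{1} X Y n)

/-- projective dimension at most `n`, characterized by vanishing of `Ext^{n+1}(M, -)`. -/
noncomputable def pdLE (M : ModuleCat.{0} Λ) (n : ℕ) : Prop :=
  ∀ N : ModuleCat.{0} Λ, extZero Λ (n + 1) M N

noncomputable def pdEq (M : ModuleCat.{0} Λ) (n : ℕ) : Prop :=
  pdLE Λ M n ∧ ∀ m : ℕ, pdLE Λ M m → n ≤ m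

/-- injective dimension at most `n`, characterized by vanishing of `Ext^{n+1}(-, M)`. -/
noncomputable def idLE (M : ModuleCat.{0} Λ) (n : ℕ) : Prop :=
  ∀ N : ModuleCat.{0} Λ, extZero Λ (n + 1) N M

noncomputable def idEq (M : ModuleCat.{0} Λ) (n : ℕ) : Prop :=
  idLE Λ M n ∧ ∀ m : ℕ, idLE Λ M m → n ≤ m

noncomputable def glDimLE (n : ℕ) : Prop := ∀ M : ModuleCat.{0} Λ, pdLE Λ M n

noncomputable def glDimEq (n : ℕ) : Prop :=
  glDimLE Λ n ∧ ∀ m : ℕ, glDimLE Λ m → n ≤ m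

section Maps

variable {M N : Type} [AddCommGroup M] [Module Λ M] [AddCommGroup N] [Module Λ N]

/-- A homomorphism `f : M → N` is left minimal if every `g : N → N` with `g ∘ f = f`
is an automorphism. -/
def IsLeftMinimal (f : M →ₗ[Λ] N) : Prop :=
  ∀ g : N →ₗ[Λ] N, g.comp f = f → Function.Bijective g

/-- A homomorphism `f : M → N` is right minimal if every `h : M → M` with `f ∘ h = f`
is an automorphism. -/
def IsRightMinimal (f : M →ₗ[Λ] N) : Prop :=
  ∀ h : M →ₗ[Λ] M, f.comp h = f → Function.Bijective h

/-- `g, f` form a short exact sequence `0 → A → B → C → 0`. -/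
def SES {A B C : Type} [AddCommGroup A] [Module Λ A] [AddCommGroup B] [Module Λ B]
    [AddCommGroup C] [Module Λ C] (g : A →ₗ[Λ] B) (f : B →ₗ[Λ] C) : Prop :=
  Function.Injective g ∧ Function.Surjective f ∧ LinearMap.range g = LinearMap.ker f

/-- The monomorphism `g : A → B` splits. -/
def Splits {A B : Type} [AddCommGroup A] [Module Λ A] [AddCommGroup B] [Module Λ B]
    (g : A →ₗ[Λ] B) : Prop :=
  ∃ r : B →ₗ[Λ] A, r.comp g = LinearMap.id

/-- `X` is (isomorphic to) a direct summand of `Y`. -/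
def IsSummand (X Y : Type) [AddCommGroup X] [Module Λ X] [AddCommGroup Y] [Module Λ Y] :
    Prop :=
  ∃ (i : X →ₗ[Λ] Y) (p : Y →ₗ[Λ] X), p.comp i = LinearMap.id

/-- An indecomposable module: non-zero, and the only idempotent endomorphisms are `0` and `1`. -/
def Indecomposable (M : Type) [AddCommGroup M] [Module Λ M] : Prop :=
  Nontrivial M ∧ ∀ e : M →ₗ[Λ] M, e.comp e = e → e = 0 ∨ e = LinearMap.id

/-- An essential submodule. -/
def Essential (N : Submodule Λ M) : Prop := ∀ K : Submodule Λ M, K ⊓ N = ⊥ → K = ⊥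

/-- A superfluous (small) submodule. -/
def Superfluous (N : Submodule Λ M) : Prop := ∀ K : Submodule Λ M, K ⊔ N = ⊤ → K = ⊤

/-- `f : M → I` is an injective envelope of `M`. -/
def IsInjEnvelope {I : Type} [AddCommGroup I] [Module Λ I] (f : M →ₗ[Λ] I) : Prop :=
  Module.Injective Λ I ∧ Function.Injective f ∧ Essential Λ (LinearMap.range f)

end Maps

/-- Auslander's 1-Gorenstein: the injective envelope of the left regular module is projective. -/
def AuslanderOneGorenstein : Prop :=
  ∀ (I : ModuleCat.{0} Λ) (f : Λ →ₗ[Λ] I), IsInjEnvelope Λ f → Module.Projective Λ I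

/-- membership in `add (Λ ⊕ D(Λ^op))`: direct summands of (finite direct sums of)
finitely generated projective and injective modules. -/
def InAddProjInj (X : ModuleCat.{0} Λ) : Prop :=
  ∃ (P I : ModuleCat.{0} Λ), Module.Projective Λ P ∧ Module.Finite Λ P ∧
    Module.Injective Λ I ∧ Module.Finite Λ I ∧ IsSummand Λ X (P × I)

/-- `D` is a maximal `n`-orthogonal subcategory of `mod Λ`. -/
noncomputable def IsMaxNOrthogonal (D : ModuleCat.{0} Λ → Prop) (n : ℕ) : Prop :=
  (∀ X, D X → Module.Finite Λ X) ∧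
  ∀ X : ModuleCat.{0} Λ, Module.Finite Λ X →
    ((D X ↔ ∀ Y, D Y → ∀ i : ℕ, 1 ≤ i → i ≤ n → extZero Λ i X Y) ∧
     (D X ↔ ∀ Y, D Y → ∀ i : ℕ, 1 ≤ i → i ≤ n → extZero Λ i Y X))

/-- `Λ` admits the trivial maximal `n`-orthogonal subcategory `add (Λ ⊕ D(Λ^op))`. -/
noncomputable def HasTrivialMaxOrth (n : ℕ) : Prop :=
  IsMaxNOrthogonal Λ (InAddProjInj Λ) n

/-- a right `𝒞`-approximation. -/
def IsRightApprox (C : ModuleCat.{0} Λ → Prop) {X D : ModuleCat.{0} Λ} (f : X ⟶ D) : Prop :=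
  C X ∧ ∀ C' : ModuleCat.{0} Λ, C C' → ∀ g : C' ⟶ D, ∃ h : C' ⟶ X, h ≫ f = g

/-- a left `𝒞`-approximation. -/
def IsLeftApprox (C : ModuleCat.{0} Λ → Prop) {D X : ModuleCat.{0} Λ} (f : D ⟶ X) : Prop :=
  C X ∧ ∀ C' : ModuleCat.{0} Λ, C C' → ∀ g : D ⟶ C', ∃ h : X ⟶ C', f ≫ h = g

/-- A minimal injective resolution `0 → M → I⁰ → I¹ → ⋯`. -/
structure MinInjRes (M : ModuleCat.{0} Λ) where
  I : ℕ → ModuleCat.{0} Λ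
  ι : M ⟶ I 0
  d : ∀ i : ℕ, I i ⟶ I (i + 1)
  inj : ∀ i, Module.Injective Λ (I i)
  mono : Function.Injective ι
  exact0 : LinearMap.range ι.hom = LinearMap.ker (d 0).hom
  exact : ∀ i, LinearMap.range (d i).hom = LinearMap.ker (d (i + 1)).hom
  ess0 : Essential Λ (LinearMap.range ι.hom)
  ess : ∀ i, Essential Λ (LinearMap.range (d i).hom)

/-- A minimal projective resolution `⋯ → P₁ → P₀ → M → 0`. -/
structure MinProjRes (M : ModuleCat.{0} Λ) where
  P : ℕ → ModuleCat.{0} Λ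
  π : P 0 ⟶ M
  d : ∀ i : ℕ, P (i + 1) ⟶ P i
  proj : ∀ i, Module.Projective Λ (P i)
  epi : Function.Surjective π
  exact0 : LinearMap.range (d 0).hom = LinearMap.ker π.hom
  exact : ∀ i, LinearMap.range (d (i + 1)).hom = LinearMap.ker (d i).hom
  sup0 : Superfluous Λ (LinearMap.ker π.hom)
  sup : ∀ i, Superfluous Λ (LinearMap.ker (d i).hom)

/-- The map `Hom(N, Λ) → Hom(M, Λ)` induced by `f : M → N`; it is `Λ^op`-linear. -/
def dualMap {M N : Type} [AddCommGroup M] [Module Λ M] [AddCommGroup N] [Module Λ N]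
    (f : M →ₗ[Λ] N) : (N →ₗ[Λ] Λ) →ₗ[Λᵐᵒᵖ] (M →ₗ[Λ] Λ) where
  toFun g := g.comp f
  map_add' a b := by ext; simp
  map_smul' a b := by ext; simp

/-- `Ext¹_Λ(M, Λ)` as a `Λ^op`-module, computed from a projective resolution of `M`. -/
def ext1C {M : ModuleCat.{0} Λ} (rs : MinProjRes Λ M) : Type :=
  letI : HasQuotient (↥(LinearMap.ker (dualMap Λ (rs.d 1).hom)))
      (Submodule Λᵐᵒᵖ ↥(LinearMap.ker (dualMap Λ (rs.d 1).hom))) := Submodule.hasQuotient (R := Λᵐᵒᵖ) (M := ↥(LinearMap.ker (dualMap Λ (rs.d 1).hom)))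
  ↥(LinearMap.ker (dualMap Λ (rs.d 1).hom)) ⧸
    (LinearMap.range (dualMap Λ (rs.d 0).hom)).comap (LinearMap.ker (dualMap Λ (rs.d 1).hom)).subtype

noncomputable instance {M : ModuleCat.{0} Λ} (rs : MinProjRes Λ M) :
    AddCommGroup (ext1C Λ rs) := by unfold ext1C; infer_instance

noncomputable instance {M : ModuleCat.{0} Λ} (rs : MinProjRes Λ M) :
    Module Λᵐᵒᵖ (ext1C Λ rs) := by unfold ext1C; infer_instance

/-- `Ext²_Λ(M, Λ)` as a `Λ^op`-module, computed from a projective resolution of `M`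
(assuming `pd M ≤ 2`, so that `P₃* → P₂*` has image `im(P₁* → P₂*)`). -/
def ext2C {M : ModuleCat.{0} Λ} (rs : MinProjRes Λ M) : Type :=
  letI : HasQuotient (↥(rs.P 2) →ₗ[Λ] Λ) (Submodule Λᵐᵒᵖ (↥(rs.P 2) →ₗ[Λ] Λ)) :=
    Submodule.hasQuotient
  (↥(rs.P 2) →ₗ[Λ] Λ) ⧸ LinearMap.range (dualMap Λ (rs.d 1).hom)

noncomputable instance {M : ModuleCat.{0} Λ} (rs : MinProjRes Λ M) :
    AddCommGroup (ext2C Λ rs) := by unfold ext2C; infer_instance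

noncomputable instance {M : ModuleCat.{0} Λ} (rs : MinProjRes Λ M) :
    Module Λᵐᵒᵖ (ext2C Λ rs) := by unfold ext2C; infer_instance

/-- `X` belongs to `add T`. -/
def InAdd (T : Type) [AddCommGroup T] [Module Λ T] (X : Type) [AddCommGroup X]
    [Module Λ X] : Prop :=
  ∃ n : ℕ, IsSummand Λ X (Fin n → T)

/-- A (classical) tilting module. -/
noncomputable def IsTiltingModule (T : Type) [AddCommGroup T] [Module Λ T] : Prop :=
  Module.Finite Λ T ∧ pdLE Λ (ModuleCat.of Λ T) 1 ∧
    extZero Λ 1 (ModuleCat.of Λ T) (ModuleCat.of Λ T) ∧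
    ∃ (T0 T1 : ModuleCat.{0} Λ) (g : Λ →ₗ[Λ] T0) (f : T0 →ₗ[Λ] T1),
      InAdd Λ T T0 ∧ InAdd Λ T T1 ∧ SES Λ g f

/-- Witness that `Λ` is a tilted algebra: `Λ ≅ End_H(T)` for a tilting module `T` over a
hereditary Artinian algebra `H`. -/
structure TiltedWitness : Type 1 where
  H : Type
  [ringH : Ring H]
  R : Type
  [commR : CommRing R]
  [artR : IsArtinianRing R]
  [algRH : Algebra R H]
  finRH : Module.Finite R H
  hereditary : glDimLE H 1
  T : Type
  [acgT : AddCommGroup T]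
  [modT : Module H T]
  tilting : IsTiltingModule H T
  iso : Λ ≃+* Module.End H T

noncomputable def IsTiltedAlgebra : Prop := Nonempty (TiltedWitness Λ)

/-- An almost hereditary algebra. -/
noncomputable def AlmostHereditary : Prop :=
  glDimLE Λ 2 ∧ ∀ M : ModuleCat.{0} Λ, Module.Finite Λ M → Indecomposable Λ M →
    (pdLE Λ M 1 ∨ idLE Λ M 1)

section Aux

/-- Transfer Noetherianity from an `R ⧸ J`-module structure back to `R`. -/
lemma aux_isNoetherian_of_quotient_action {R : Type} [CommRing R] (J : Ideal R)
    (Q : Type) [AddCommGroup Q] [Module R Q]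
    (htors : Module.IsTorsionBySet R Q (J : Set R))
    (hss : IsSemisimpleRing (R ⧸ J)) (hart : IsArtinian R Q) : IsNoetherian R Q := by
  letI := htors.module
  haveI : IsScalarTower R (R ⧸ J) Q := Module.IsTorsionBySet.isScalarTower htors
  haveI : IsArtinian (R ⧸ J) Q := isArtinian_of_tower R hart
  haveI : IsNoetherian (R ⧸ J) Q := (IsSemisimpleModule.finite_tfae.out 2 1).mp ‹_›
  have key : ∀ p : Submodule R Q, ∃ p' : Submodule (R ⧸ J) Q,
      ∀ x : Q, x ∈ p' ↔ x ∈ p := by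
    intro p
    refine ⟨{ carrier := p
              add_mem' := fun h1 h2 => p.add_mem h1 h2
              zero_mem' := p.zero_mem
              smul_mem' := by
                intro c x hx
                obtain ⟨r, rfl⟩ := Ideal.Quotient.mk_surjective c
                have hsm : (Ideal.Quotient.mk J r) • x = r • x := htors.mk_smul r x
                show (Ideal.Quotient.mk J r) • x ∈ p
                rw [hsm]
                exact p.smul_mem r hx }, fun x => Iff.rfl⟩
  refine ⟨fun p => ?_⟩
  obtain ⟨p', hp'⟩ := key p
  obtain ⟨s, hs⟩ := IsNoetherian.noetherian (R := R ⧸ J) (M := Q) p'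
  refine ⟨s, le_antisymm ?_ ?_⟩
  · rw [Submodule.span_le]
    intro x hx
    exact (hp' x).mp (hs ▸ Submodule.subset_span hx)
  · intro x hx
    obtain ⟨q', hq'⟩ := key (Submodule.span R (s : Set Q))
    have hx' : x ∈ Submodule.span (R ⧸ J) (s : Set Q) := by
      rw [hs]; exact (hp' x).mpr hx
    have hle : Submodule.span (R ⧸ J) (s : Set Q) ≤ q' := by
      rw [Submodule.span_le]
      intro y hy
      exact (hq' y).mpr (Submodule.subset_span hy)
    exact (hq' x).mp (hle hx')

/-- Hopkins–Levitzki for commutative rings: a commutative Artinian ring is Noetherian. -/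
lemma aux_isNoetherianRing (R : Type) [CommRing R] [IsArtinianRing R] : IsNoetherianRing R := by
  obtain ⟨k, hk⟩ := IsArtinianRing.isNilpotent_jacobson_bot (R := R)
  set J : Ideal R := Ideal.jacobson (⊥ : Ideal R) with hJ
  haveI hred : IsReduced (R ⧸ J) :=
    (Ideal.isRadical_iff_quotient_reduced J).mp (Ideal.isRadical_jacobson ⊥)
  haveI hss : IsSemisimpleRing (R ⧸ J) := IsArtinianRing.isSemisimpleRing_of_isReduced (R ⧸ J)
  have main : ∀ j : ℕ, IsNoetherian R ↥(J ^ (k - j)) := by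
    intro j
    induction j with
    | zero =>
      rw [Nat.sub_zero]
      have hk' : J ^ k = ⊥ := hk
      rw [hk']
      exact isNoetherian_of_finite R _
    | succ j ih =>
      by_cases hj : j < k
      · have hkk : k - j = (k - (j + 1)) + 1 := by omega
        set i := k - (j + 1)
        rw [hkk] at ih
        -- show `IsNoetherian R ↥(J ^ i)` from `IsNoetherian R ↥(J ^ (i+1))`
        have hle : J ^ (i + 1) ≤ J ^ i := Ideal.pow_le_pow_right (Nat.le_succ i)
        set S : Submodule R ↥(J ^ i) :=
          Submodule.comap (J ^ i).subtype (J ^ (i + 1)) with hS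
        rw [isNoetherian_iff_submodule_quotient S]
        constructor
        · exact isNoetherian_of_linearEquiv (Submodule.comapSubtypeEquivOfLe hle).symm
        · refine aux_isNoetherian_of_quotient_action J _ ?_ hss inferInstance
          intro q x
          obtain ⟨⟨m, hm⟩, rfl⟩ := Submodule.Quotient.mk_surjective S q
          rw [← Submodule.Quotient.mk_smul, Submodule.Quotient.mk_eq_zero]
          show (x : R) • m ∈ J ^ (i + 1)
          rw [smul_eq_mul, mul_comm, pow_succ]
          exact Ideal.mul_mem_mul hm x.2
      · have : k - (j + 1) = k - j := by omega
        rw [this]; exact ih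
  have htop := main k
  rw [Nat.sub_self, pow_zero, Ideal.one_eq_top] at htop
  exact isNoetherian_of_linearEquiv (Submodule.topEquiv (R := R) (M := R))

/-- A finitely generated module over an algebra finite over a commutative Artinian ring is
Noetherian and Artinian. -/
lemma aux_noeth_art (Λ R M : Type) [CommRing R] [IsArtinianRing R] [Ring Λ] [Algebra R Λ]
    [Module.Finite R Λ] [AddCommGroup M] [Module Λ M] [Module.Finite Λ M] :
    IsNoetherian Λ M ∧ IsArtinian Λ M := by
  letI : Module R M := Module.compHom M (algebraMap R Λ)
  haveI : IsScalarTower R Λ M := IsScalarTower.of_algebraMap_smul fun r x => rfl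
  haveI : Module.Finite R M := Module.Finite.trans Λ M
  haveI : IsNoetherianRing R := aux_isNoetherianRing R
  haveI : IsNoetherian R M := inferInstance
  haveI : IsArtinian R M := inferInstance
  exact ⟨isNoetherian_of_tower R ‹_›, isArtinian_of_tower R ‹_›⟩

/-- Fitting's lemma dichotomy for an endomorphism of an indecomposable module of finite length. -/
lemma aux_fitting {Λ M : Type} [Ring Λ] [AddCommGroup M] [Module Λ M]
    [IsNoetherian Λ M] [IsArtinian Λ M] (hM : Indecomposable Λ M) (φ : M →ₗ[Λ] M) :
    (∃ n : ℕ, φ ^ n = 0) ∨ Function.Bijective φ := by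
  obtain ⟨n, hn⟩ := Filter.eventually_atTop.mp (LinearMap.eventually_isCompl_ker_pow_range_pow φ)
  have hc := hn (n + 1) (Nat.le_succ n)
  set k := n + 1 with hkdef
  set p := LinearMap.ker (φ ^ k) with hp
  set r := LinearMap.range (φ ^ k) with hr
  let π := Submodule.linearProjOfIsCompl r p hc.symm
  let e : M →ₗ[Λ] M := r.subtype ∘ₗ π
  have happ : ∀ x, e x = (π x : M) := fun x => rfl
  have he : e.comp e = e := by
    ext x
    show e (e x) = e x
    rw [happ, happ]
    exact congrArg Subtype.val (Submodule.linearProjOfIsCompl_apply_left hc.symm (π x))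
  rcases hM.2 e he with h0 | h1
  · left
    refine ⟨k, ?_⟩
    ext x
    have hmem : (φ ^ k) x ∈ r := LinearMap.mem_range_self _ x
    have : e ((φ ^ k) x) = (φ ^ k) x := by
      rw [happ]
      exact congrArg Subtype.val (Submodule.linearProjOfIsCompl_apply_left hc.symm ⟨_, hmem⟩)
    rw [h0] at this
    simpa using this.symm
  · right
    constructor
    · intro x y hxy
      have hd : φ (x - y) = 0 := by rw [map_sub, hxy, sub_self]
      have hk0 : (φ ^ k) (x - y) = 0 := by
        rw [hkdef, pow_succ, Module.End.mul_apply, hd, map_zero]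
      have hxp : x - y ∈ p := hk0
      have : e (x - y) = 0 := by
        rw [happ]
        exact congrArg Subtype.val (Submodule.linearProjOfIsCompl_apply_right hc.symm ⟨x - y, hxp⟩)
      rw [h1] at this
      simpa [sub_eq_zero] using this
    · intro x
      have : e x = x := by rw [h1]; rfl
      have hxr : x ∈ r := by
        rw [← this, happ]; exact (π x).2
      obtain ⟨y, hy⟩ := hxr
      exact ⟨(φ ^ n) y, by rw [← Module.End.mul_apply, ← pow_succ', ← hkdef]; exact hy⟩

/-- If `v : B → B` has range inside `range g` and fixes `range g`, then `g` splits. -/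
lemma aux_splits {Λ A B : Type} [Ring Λ] [AddCommGroup A] [Module Λ A]
    [AddCommGroup B] [Module Λ B] (g : A →ₗ[Λ] B) (hg : Function.Injective g)
    (v : B →ₗ[Λ] B) (hmem : ∀ b, v b ∈ LinearMap.range g) (hvg : ∀ a, v (g a) = g a) :
    Splits Λ g := by
  let e := LinearEquiv.ofInjective g hg
  refine ⟨e.symm.toLinearMap ∘ₗ LinearMap.codRestrict (LinearMap.range g) v hmem, ?_⟩
  ext a
  have h1 : (LinearMap.codRestrict (LinearMap.range g) v hmem) (g a) = e a := by
    apply Subtype.ext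
    show v (g a) = ((e a : LinearMap.range g) : B)
    rw [hvg a]
    exact (LinearEquiv.ofInjective_apply g a).symm
  show e.symm ((LinearMap.codRestrict (LinearMap.range g) v hmem) (g a)) = a
  rw [h1, LinearEquiv.symm_apply_apply]

end Aux

theorem statement0 (Λ R : Type) [CommRing R] [IsArtinianRing R] [Ring Λ] [Algebra R Λ]
    [Module.Finite R Λ]
    (A B C : Type) [AddCommGroup A] [Module Λ A] [Module.Finite Λ A]
    [AddCommGroup B] [Module Λ B] [Module.Finite Λ B]
    [AddCommGroup C] [Module Λ C] [Module.Finite Λ C]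
    (g : A →ₗ[Λ] B) (f : B →ₗ[Λ] C) (hses : SES Λ g f) (hns : ¬ Splits Λ g) :
    (Indecomposable Λ C → IsLeftMinimal Λ g) ∧
    (Indecomposable Λ A → IsRightMinimal Λ f) := by
  obtain ⟨hginj, hfsurj, hexact⟩ := hses
  obtain ⟨hAn, hAa⟩ := aux_noeth_art Λ R A
  obtain ⟨hCn, hCa⟩ := aux_noeth_art Λ R C
  have hmemker : ∀ b : B, f b = 0 ↔ b ∈ LinearMap.range g := by
    intro b; rw [hexact]; exact LinearMap.mem_ker.symm
  let e := LinearEquiv.ofInjective g hginj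
  let q := f.quotKerEquivOfSurjective hfsurj
  have hqmk : ∀ b : B, q (Submodule.Quotient.mk b) = f b := fun b => rfl
  have hqsymm : ∀ b : B, q.symm (f b) = Submodule.Quotient.mk b := fun b => by
    apply q.injective; rw [q.apply_symm_apply, hqmk]
  have hfg0 : ∀ a : A, f (g a) = 0 := fun a =>
    (hmemker (g a)).mpr (LinearMap.mem_range_self g a)
  constructor
  · -- left minimality of g
    intro hC u hu
    have hug : ∀ a, u (g a) = g a := fun a => LinearMap.congr_fun hu a
    have hufix : ∀ b, b ∈ LinearMap.range g → u b = b := by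
      rintro b ⟨a, rfl⟩; exact hug a
    -- construct the induced endomorphism ū of C
    have hkv : LinearMap.ker f ≤ LinearMap.ker (f ∘ₗ u) := by
      intro b hb
      have hb' : f b = 0 := LinearMap.mem_ker.mp hb
      have : u b = b := hufix b ((hmemker b).mp hb')
      show f (u b) = 0
      rw [this, hb']
    let w : (B ⧸ LinearMap.ker f) →ₗ[Λ] C := (LinearMap.ker f).liftQ (f ∘ₗ u) hkv
    let ubar : C →ₗ[Λ] C := w ∘ₗ (q.symm : C →ₗ[Λ] B ⧸ LinearMap.ker f)
    have hcomm : ∀ b, ubar (f b) = f (u b) := by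
      intro b
      show w (q.symm (f b)) = f (u b)
      rw [hqsymm b]
      exact Submodule.liftQ_apply _ _ b
    have hcommn : ∀ n b, (ubar ^ n) (f b) = f ((u ^ n) b) := by
      intro n
      induction n with
      | zero => intro b; simp
      | succ n ih =>
        intro b
        rw [pow_succ', Module.End.mul_apply, ih b, hcomm ((u ^ n) b),
          ← Module.End.mul_apply, ← pow_succ']
    rcases aux_fitting hC ubar with ⟨n, hn⟩ | hbij
    · -- ū nilpotent : the sequence splits, contradiction
      exfalso
      apply hns
      have hung : ∀ m a, (u ^ m) (g a) = g a := by
        intro m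
        induction m with
        | zero => intro a; simp
        | succ m ih =>
          intro a
          rw [pow_succ, Module.End.mul_apply, hug, ih]
      refine aux_splits g hginj (u ^ n) (fun b => ?_) (hung n)
      rw [← hmemker]
      rw [← hcommn n b, hn]
      simp
    · -- ū bijective : u bijective via five lemma
      constructor
      · intro x y hxy
        have hd : u (x - y) = 0 := by rw [map_sub, hxy, sub_self]
        have hf0 : f (x - y) = 0 := by
          apply hbij.injective
          rw [hcomm, hd, map_zero, map_zero]
        obtain ⟨a, ha⟩ := (hmemker _).mp hf0
        have : u (x - y) = x - y := by rw [← ha, hug]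
        rw [hd] at this
        have := this.symm
        rwa [sub_eq_zero] at this
      · intro b
        obtain ⟨c, hc⟩ := hbij.surjective (f b)
        obtain ⟨b0, hb0⟩ := hfsurj c
        have : f (b - u b0) = 0 := by
          rw [map_sub, ← hcomm, hb0, hc, sub_self]
        obtain ⟨a, ha⟩ := (hmemker _).mp this
        refine ⟨b0 + g a, ?_⟩
        rw [map_add, hug, ha]
        abel
  · -- right minimality of f
    intro hA h hh
    have hfh : ∀ b, f (h b) = f b := fun b => LinearMap.congr_fun hh b
    have hmem : ∀ a, (h ∘ₗ g) a ∈ LinearMap.range g := by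
      intro a
      rw [← hmemker]
      show f (h (g a)) = 0
      rw [hfh, hfg0]
    let hbar : A →ₗ[Λ] A :=
      e.symm.toLinearMap ∘ₗ LinearMap.codRestrict (LinearMap.range g) (h ∘ₗ g) hmem
    have hgcoe : ∀ y : LinearMap.range g, g (e.symm y) = (y : B) := by
      intro y
      have h1 : ((e (e.symm y) : LinearMap.range g) : B) = g (e.symm y) :=
        LinearEquiv.ofInjective_apply g (e.symm y)
      rw [← h1, LinearEquiv.apply_symm_apply]
    have hcomm : ∀ a, g (hbar a) = h (g a) := by
      intro a
      show g (e.symm (LinearMap.codRestrict (LinearMap.range g) (h ∘ₗ g) hmem a)) = h (g a)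
      rw [hgcoe]
      rfl
    have hcommn : ∀ m a, g ((hbar ^ m) a) = (h ^ m) (g a) := by
      intro m
      induction m with
      | zero => intro a; simp
      | succ m ih =>
        intro a
        rw [pow_succ, Module.End.mul_apply, ih (hbar a), hcomm,
          ← Module.End.mul_apply, ← pow_succ]
    have hfhn : ∀ m b, f ((h ^ m) b) = f b := by
      intro m
      induction m with
      | zero => intro b; simp
      | succ m ih =>
        intro b
        rw [pow_succ', Module.End.mul_apply, hfh, ih]
    rcases aux_fitting hA hbar with ⟨n, hn⟩ | hbij
    · -- h̄ nilpotent : the sequence splits, contradiction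
      exfalso
      apply hns
      -- h^n kills ker f, hence factors through C giving a section of f
      have hker : LinearMap.ker f ≤ LinearMap.ker ((h ^ n : B →ₗ[Λ] B)) := by
        intro b hb
        have hb' : f b = 0 := LinearMap.mem_ker.mp hb
        obtain ⟨a, rfl⟩ := (hmemker b).mp hb'
        show (h ^ n) (g a) = 0
        rw [← hcommn, hn]
        simp
      let w2 : (B ⧸ LinearMap.ker f) →ₗ[Λ] B := (LinearMap.ker f).liftQ (h ^ n) hker
      let s : C →ₗ[Λ] B := w2 ∘ₗ (q.symm : C →ₗ[Λ] B ⧸ LinearMap.ker f)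
      have hs : ∀ b, s (f b) = (h ^ n) b := by
        intro b
        show w2 (q.symm (f b)) = (h ^ n) b
        rw [hqsymm b]
        exact Submodule.liftQ_apply _ _ b
      refine aux_splits g hginj (LinearMap.id - s ∘ₗ f) (fun b => ?_) (fun a => ?_)
      · rw [← hmemker]
        have : f (b - s (f b)) = 0 := by
          obtain ⟨b', hb'⟩ := hfsurj (f b)
          rw [map_sub, hs, hfhn, sub_self]
        simpa using this
      · have : s (f (g a)) = 0 := by rw [hfg0, map_zero]
        simp [this]
    · -- h̄ bijective : h bijective
      constructor
      · intro x y hxy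
        have hd : h (x - y) = 0 := by rw [map_sub, hxy, sub_self]
        have hf0 : f (x - y) = 0 := by rw [← hfh, hd, map_zero]
        obtain ⟨a, ha⟩ := (hmemker _).mp hf0
        have hga : g (hbar a) = 0 := by rw [hcomm, ha, hd]
        have ha0 : hbar a = 0 := by
          apply hginj; rw [hga, map_zero]
        have : a = 0 := by
          apply hbij.injective; rw [ha0, map_zero]
        have : x - y = 0 := by rw [← ha, this, map_zero]
        rwa [sub_eq_zero] at this
      · intro b
        have : f (b - h b) = 0 := by rw [map_sub, hfh, sub_self]
        obtain ⟨a, ha⟩ := (hmemker _).mp this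
        obtain ⟨a', ha'⟩ := hbij.surjective a
        refine ⟨b + g a', ?_⟩
        rw [map_add, ← hcomm, ha', ha]
        abel

end Paper
end

section
/- Let Λ be an Artinian algebra and let 0 → A →g B →f C → 0 be a non-split short exact sequence of finitely generated Λ-modules. If f is right minimal, then Ext¹_Λ(C, A') ≠ 0 for every non-zero direct summand A' of A. -/
set_option synthInstance.maxHeartbeats 1000000
set_option maxHeartbeats 1000000
open CategoryTheory

namespace Paper

variable (Λ : Type) [Ring Λ]

section ExtDegreeZero

universe uw uw' uv uu

variable {𝒞 : Type uu} [Category.{uv} 𝒞] [Abelian 𝒞] [HasDerivedCategory.{uw'} 𝒞]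
  [HasExt.{uw} 𝒞]

/-- The natural isomorphism `singleFunctor 𝒞 0 ⋙ H⁰ ≅ 𝟭 𝒞`. -/
noncomputable def singleCompHomology :
    DerivedCategory.singleFunctor 𝒞 0 ⋙ DerivedCategory.homologyFunctor 𝒞 0 ≅ 𝟭 𝒞 :=
  Functor.isoWhiskerRight ((SingleFunctors.evaluation 𝒞 (DerivedCategory 𝒞) (0 : ℤ)).mapIso
      (DerivedCategory.singleFunctorsPostcompQIso 𝒞)) (DerivedCategory.homologyFunctor 𝒞 0) ≪≫
    Functor.associator _ _ _ ≪≫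
    Functor.isoWhiskerLeft (CochainComplex.singleFunctor 𝒞 0)
      (DerivedCategory.homologyFunctorFactors 𝒞 0) ≪≫
    HomologicalComplex.homologyFunctorSingleIso 𝒞 (ComplexShape.up ℤ) 0

/-- Extract an honest morphism from a degree `0` Ext class. -/
noncomputable def extToHom {X Y : 𝒞} (α : Abelian.Ext X Y 0) : X ⟶ Y :=
  singleCompHomology.inv.app X ≫
    (DerivedCategory.homologyFunctor 𝒞 0).map (α.hom ≫
      (shiftFunctorZero' (DerivedCategory 𝒞) ((0 : ℕ) : ℤ) (by simp)).hom.app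
        ((DerivedCategory.singleFunctor 𝒞 0).obj Y)) ≫
    singleCompHomology.hom.app Y

lemma extToHom_mk₀ {X Y : 𝒞} (f : X ⟶ Y) : extToHom (Abelian.Ext.mk₀ f) = f := by
  dsimp [extToHom]
  rw [Abelian.Ext.mk₀_hom]
  dsimp [ShiftedHom.mk₀]
  have := singleCompHomology.hom.naturality (f := f)
  dsimp at this
  rw [Category.assoc, Iso.inv_hom_id_app]
  simp only [Functor.id_obj, Category.comp_id]
  rw [this, ← Category.assoc, Iso.inv_hom_id_app]
  simp only [Functor.id_obj, Category.id_comp]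

lemma extToHom_mk₀_comp {X Y Z : 𝒞} (f : X ⟶ Y) (α : Abelian.Ext Y Z 0) :
    extToHom ((Abelian.Ext.mk₀ f).comp α (zero_add 0)) = f ≫ extToHom α := by
  dsimp [extToHom]
  rw [Abelian.Ext.comp_hom, Abelian.Ext.mk₀_hom, ShiftedHom.mk₀_comp, Category.assoc,
    Functor.map_comp]
  have := singleCompHomology.inv.naturality (f := f)
  dsimp at this
  simp only [← Category.assoc]
  rw [← this]

end ExtDegreeZero

theorem statement2 (Λ R : Type) [CommRing R] [IsArtinianRing R] [Ring Λ] [Algebra R Λ]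
    [Module.Finite R Λ]
    (A B C : Type) [AddCommGroup A] [Module Λ A] [Module.Finite Λ A]
    [AddCommGroup B] [Module Λ B] [Module.Finite Λ B]
    [AddCommGroup C] [Module Λ C] [Module.Finite Λ C]
    (g : A →ₗ[Λ] B) (f : B →ₗ[Λ] C) (hses : SES Λ g f) (hns : ¬ Splits Λ g)
    (hmin : IsRightMinimal Λ f) :
    ∀ A' : ModuleCat.{0} Λ, Nontrivial A' → IsSummand Λ A' A →
      ¬ extZero Λ 1 (ModuleCat.of Λ C) A' := by
  intro A' hA' hsum hext
  letI : HasDerivedCategory (ModuleCat.{0} Λ) := HasDerivedCategory.standard _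
  haveI hE : HasExt.{1} (ModuleCat.{0} Λ) := hasExt_of_hasDerivedCategory _
  unfold extZero at hext
  obtain ⟨hginj, hfsurj, hrk⟩ := hses
  obtain ⟨i, p, hpi⟩ := hsum
  have hfg : ∀ a : A, f (g a) = 0 := by
    intro a
    have : g a ∈ LinearMap.ker f := by rw [← hrk]; exact ⟨a, rfl⟩
    exact this
  let S : ShortComplex (ModuleCat.{0} Λ) :=
    ShortComplex.mk (ModuleCat.ofHom g) (ModuleCat.ofHom f)
      (ModuleCat.hom_ext (LinearMap.ext fun a => hfg a))
  have hS : S.ShortExact :=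
    { exact := by
        rw [ShortComplex.moduleCat_exact_iff]
        intro b hb
        have hmem : b ∈ LinearMap.range g := by rw [hrk]; exact hb
        obtain ⟨a, ha⟩ := hmem
        exact ⟨a, ha⟩
      mono_f := (ModuleCat.mono_iff_injective _).2 hginj
      epi_g := (ModuleCat.epi_iff_surjective _).2 hfsurj }
  haveI := hext
  obtain ⟨x₂, hx₂⟩ := Abelian.Ext.contravariant_sequence_exact₁ hS A'
    (Abelian.Ext.mk₀ (show S.X₁ ⟶ A' from ModuleCat.ofHom p)) rfl (Subsingleton.elim _ _)
  have hteq : (S.f ≫ extToHom x₂ : S.X₁ ⟶ A') = (show S.X₁ ⟶ A' from ModuleCat.ofHom p) := by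
    rw [← extToHom_mk₀_comp, hx₂, extToHom_mk₀]
  let t : B →ₗ[Λ] ↥A' := (extToHom x₂).hom
  have hpt : ∀ a : A, t (g a) = p a := fun a =>
    congrArg (fun φ : S.X₁ ⟶ A' => φ a) hteq
  let h : B →ₗ[Λ] B := LinearMap.id - (g.comp i).comp t
  have hfh : f.comp h = f := by
    ext b
    simp only [h, LinearMap.comp_apply, LinearMap.sub_apply, LinearMap.id_apply, map_sub]
    rw [hfg, sub_zero]
  have hbij := hmin h hfh
  obtain ⟨a', ha'⟩ := exists_ne (0 : ↥A')
  have hia' : p (i a') = a' := congrArg (fun φ : ↥A' →ₗ[Λ] ↥A' => φ a') hpi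
  have hta : t (g (i a')) = a' := by rw [hpt, hia']
  have hz : h (g (i a')) = 0 := by
    simp only [h, LinearMap.sub_apply, LinearMap.id_apply, LinearMap.comp_apply, hta, sub_self]
  have hgz : g (i a') = 0 := hbij.1 (by rw [hz, map_zero])
  have hiz : i a' = 0 := hginj (by rw [hgz, map_zero])
  exact ha' (by rw [← hia', hiz, map_zero])

end Paper
end
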